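/- arXiv:math/9504209 — 4 statements merged into one kernel-verified Lean document; each statement's English description precedes it below -/
import Mathlib

section
/- If A ∈ SL(2,ℂ) is elliptic of order n with n ≥ 3, then ‖A − A⁻¹‖² · sin²(π/n) ≤ |(tr A)² − 4| · (‖A‖² − 2·cos²(π/n)). -/
open Matrix Real

noncomputable section

abbrev SL2C := Matrix.SpecialLinearGroup (Fin 2) ℂ

/-- The Frobenius (Hilbert–Schmidt) norm of a 2×2 complex matrix. -/
def fnorm (A : Matrix (Fin 2) (Fin 2) ℂ) : ℝ :=
  @norm _ Matrix.frobeniusSeminormedAddCommGroup.toNorm A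

instance : TopologicalSpace SL2C :=
  TopologicalSpace.induced (fun g => (g : Matrix (Fin 2) (Fin 2) ℂ)) inferInstance

/-- A subgroup of `SL(2,ℂ)` is discrete if it is a discrete subspace of `SL(2,ℂ)`. -/
def IsDiscreteSubgroup (Γ : Subgroup SL2C) : Prop := DiscreteTopology Γ

/-- `A` is elliptic of order `n`: `A^n = ±1` but `A^k ≠ ±1` for `1 ≤ k < n`. -/
def IsEllipticOfOrder (A : SL2C) (n : ℕ) : Prop :=
  (A ^ n = 1 ∨ A ^ n = -1) ∧ ∀ k : ℕ, 1 ≤ k → k < n → A ^ k ≠ 1 ∧ A ^ k ≠ -1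

/-- `A` is parabolic: `A ≠ ±1` and `tr A = ±2`. -/
def IsParabolic (A : SL2C) : Prop :=
  A ≠ 1 ∧ A ≠ -1 ∧ (Matrix.trace (A : Matrix (Fin 2) (Fin 2) ℂ) = 2 ∨
    Matrix.trace (A : Matrix (Fin 2) (Fin 2) ℂ) = -2)

/-- `S` and `T` have a common eigenvector in `ℂ²`. -/
def HasCommonEigenvector (S T : SL2C) : Prop :=
  ∃ v : Fin 2 → ℂ, v ≠ 0 ∧ (∃ a : ℂ, (S : Matrix (Fin 2) (Fin 2) ℂ).mulVec v = a • v) ∧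
    (∃ b : ℂ, (T : Matrix (Fin 2) (Fin 2) ℂ).mulVec v = b • v)

/-- A subgroup of `SL(2,ℂ)` is nonelementary if it contains two elements `S`, `T`
with `S^k ≠ ±1 ≠ T^k` for all `k ≥ 1` having no common eigenvector in `ℂ²`. -/
def IsNonelementary (Γ : Subgroup SL2C) : Prop :=
  ∃ S ∈ Γ, ∃ T ∈ Γ, (∀ k : ℕ, 1 ≤ k → S ^ k ≠ 1 ∧ S ^ k ≠ -1) ∧
    (∀ k : ℕ, 1 ≤ k → T ^ k ≠ 1 ∧ T ^ k ≠ -1) ∧ ¬ HasCommonEigenvector S T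

/-- The trace parameter `β(A) = tr²(A) - 4`. -/
def βp (A : SL2C) : ℂ := (Matrix.trace (A : Matrix (Fin 2) (Fin 2) ℂ)) ^ 2 - 4

/-- The commutator parameter `γ(A,B) = tr [A,B] - 2`. -/
def γp (A B : SL2C) : ℂ :=
  Matrix.trace ((A * B * A⁻¹ * B⁻¹ : SL2C) : Matrix (Fin 2) (Fin 2) ℂ) - 2

/-- `PSL(2,ℂ)`, the quotient of `SL(2,ℂ)` by its center `{1, -1}`. -/
abbrev PSL2C := SL2C ⧸ Subgroup.center SL2C

/-- The image in `PSL(2,ℂ)` of a subgroup of `SL(2,ℂ)`. -/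
def pslImage (Γ : Subgroup SL2C) : Subgroup PSL2C :=
  Γ.map (QuotientGroup.mk' (Subgroup.center SL2C))

open Classical in
/-- `t5`: the unique real `t > 1` with
`t (t - cos²(π/5)) + (t-1) √((t+1)(t+1-2 cos²(π/5))) = 1/2`. -/
def t5 : ℝ :=
  if h : ∃ t : ℝ, 1 < t ∧
      t * (t - Real.cos (π / 5) ^ 2) +
        (t - 1) * Real.sqrt ((t + 1) * (t + 1 - 2 * Real.cos (π / 5) ^ 2)) = 1 / 2
  then h.choose else 0

/-- The value `t n = cosh (c n)` where `c n` is the sharp displacement bound for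
discrete nonelementary groups with an elliptic generator of order `n ≥ 3`. -/
def tOf : ℕ → ℝ
  | 3 => (2 * Real.sqrt (8 + 2 * Real.sqrt 5) - (1 + Real.sqrt 5)) / (6 - Real.sqrt 5)
  | 4 => (Real.sqrt (6 + 2 * Real.sqrt 3) - Real.sqrt 3) / (3 - Real.sqrt 3)
  | 5 => t5
  | 6 => 17 / 16
  | n => (5 - 2 * Real.sin (π / n) ^ 2) / (4 + 2 * Real.sin (π / n) ^ 2)

set_option maxHeartbeats 1000000

lemma cos_sq_le_aux (n : ℕ) (hn : 3 ≤ n) (k : ℤ) (hk : ¬ (n:ℤ) ∣ k) :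
    Real.cos (π * k / n) ^ 2 ≤ Real.cos (π / n) ^ 2 := by
  have hn0 : (0:ℝ) < n := by exact_mod_cast Nat.lt_of_lt_of_le (by norm_num) hn
  have hnZ : (0:ℤ) < n := by exact_mod_cast Nat.lt_of_lt_of_le (by norm_num) hn
  set q := k / (n:ℤ) with hq
  set r := k % (n:ℤ) with hr
  have hr0 : 0 < r := by
    have h1 : 0 ≤ r := Int.emod_nonneg k (by omega)
    have h2 : r ≠ 0 := fun h => hk (Int.dvd_of_emod_eq_zero h)
    omega
  have hrn : r < n := Int.emod_lt_of_pos k hnZ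
  have hk' : (k:ℝ) = (n:ℝ) * q + r := by exact_mod_cast (Int.mul_ediv_add_emod k n).symm
  have hsplit : π * k / n = π * r / n + q * π := by
    rw [hk']; field_simp; ring
  rw [hsplit, Real.cos_add_int_mul_pi, mul_pow]
  have hone : ((-1:ℝ) ^ q) ^ 2 = 1 := by
    rcases Int.even_or_odd q with h | h
    · rw [h.neg_one_zpow]; norm_num
    · rw [h.neg_one_zpow]; norm_num
  rw [hone, one_mul]
  have hπn : 0 < π / n := by positivity
  have hr1 : (1:ℝ) ≤ (r:ℝ) := by exact_mod_cast hr0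
  have hrn' : (r:ℝ) ≤ (n:ℝ) - 1 := by
    have : r ≤ (n:ℤ) - 1 := by omega
    have h3 : ((r:ℤ):ℝ) ≤ (((n:ℤ) - 1 : ℤ):ℝ) := Int.cast_le.mpr this
    push_cast at h3; linarith
  have h1 : π / n ≤ π * r / n := by
    rw [div_le_div_iff₀ hn0 hn0]
    nlinarith [Real.pi_pos, mul_pos Real.pi_pos hn0]
  have h2 : π * r / n ≤ π - π / n := by
    have key : π * r / n ≤ π * ((n:ℝ) - 1) / n := by gcongr
    have : π * ((n:ℝ) - 1) / n = π - π / n := by field_simp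
    linarith
  have hxpi : π * r / n ≤ π := by linarith [hπn]
  have c1 : Real.cos (π * r / n) ≤ Real.cos (π / n) :=
    Real.cos_le_cos_of_nonneg_of_le_pi (le_of_lt hπn) hxpi h1
  have c2 : Real.cos (π - π / n) ≤ Real.cos (π * r / n) :=
    Real.cos_le_cos_of_nonneg_of_le_pi (by positivity) (by linarith [hπn]) h2
  rw [Real.cos_pi_sub] at c2
  exact sq_le_sq' c2 c1

attribute [local instance] Matrix.frobeniusSeminormedAddCommGroup

lemma fnorm_sq_eq (M : Matrix (Fin 2) (Fin 2) ℂ) :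
    fnorm M ^ 2 = ‖M 0 0‖^2 + ‖M 0 1‖^2 + ‖M 1 0‖^2 + ‖M 1 1‖^2 := by
  have h : fnorm M = ‖M‖ := rfl
  rw [h, Matrix.frobenius_norm_def]
  have h2 : ∀ i j : Fin 2, ‖M i j‖ ^ (2:ℝ) = ‖M i j‖ ^ 2 := fun i j => by
    rw [show (2:ℝ) = ((2:ℕ):ℝ) by norm_num, Real.rpow_natCast]
  simp_rw [h2, Fin.sum_univ_two]
  have hS : (0:ℝ) ≤ ‖M 0 0‖^2 + ‖M 0 1‖^2 + (‖M 1 0‖^2 + ‖M 1 1‖^2) := by positivity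
  rw [← Real.sqrt_eq_rpow, Real.sq_sqrt hS]
  ring

lemma trace_ne_pm_two (A : SL2C) (n : ℕ) (hn : 3 ≤ n) (hA : IsEllipticOfOrder A n)
    (η : ℂ) (hη : η = 1 ∨ η = -1)
    (htr : Matrix.trace (A : Matrix (Fin 2) (Fin 2) ℂ) = 2 * η) : False := by
  set M : Matrix (Fin 2) (Fin 2) ℂ := ↑A with hM
  have hd : M 0 0 * M 1 1 - M 0 1 * M 1 0 = 1 := by
    have := A.prop
    rwa [Matrix.det_fin_two] at this
  have htr' : M 0 0 + M 1 1 = 2 * η := by rwa [Matrix.trace_fin_two] at htr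
  have hη2 : η * η = 1 := by rcases hη with h | h <;> simp [h]
  have hη0 : η ≠ 0 := by rcases hη with h | h <;> simp [h]
  set N : Matrix (Fin 2) (Fin 2) ℂ := M - η • 1 with hN
  have hN2 : N * N = 0 := by
    ext i j
    fin_cases i <;> fin_cases j <;>
      simp [hN, Matrix.mul_apply, Fin.sum_univ_two, Matrix.sub_apply, Matrix.smul_apply,
        Matrix.one_apply] <;>
      first
        | linear_combination -hd + M 0 0 * htr' + hη2
        | linear_combination M 0 1 * htr'
        | linear_combination M 1 0 * htr'
        | linear_combination -hd + M 1 1 * htr' + hη2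
  have hNtr : Matrix.trace N = 0 := by
    simp [hN, Matrix.trace_fin_two, Matrix.sub_apply, Matrix.smul_apply, Matrix.one_apply]
    linear_combination htr'
  have hMN : M = η • 1 + N := by simp [hN]
  have hpow2 : ∀ j : ℕ, η ^ (j + 2) = η ^ j := fun j => by
    rw [pow_add, pow_two, hη2, mul_one]
  have hMk : ∀ k : ℕ, M ^ k = (η ^ k) • 1 + ((k : ℂ) * η ^ (k + 1)) • N := by
    intro k
    induction k with
    | zero => simp
    | succ k ih =>
      rw [pow_succ, ih, hMN]
      simp only [Matrix.add_mul, Matrix.mul_add, smul_mul_assoc, mul_smul_comm,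
        Matrix.one_mul, Matrix.mul_one, hN2, smul_zero, add_zero, smul_smul]
      match_scalars
      · push_cast
        linear_combination (η * η ^ k) * hη2
      · push_cast
        linear_combination (-1 : ℂ) * η ^ k * hη2
  -- coercion of A^n
  have hMn : M ^ n = (1 : ℂ) • 1 ∨ M ^ n = (-1 : ℂ) • 1 := by
    rcases hA.1 with h | h
    · left
      rw [hM, ← Matrix.SpecialLinearGroup.coe_pow, h]
      simp
    · right
      rw [hM, ← Matrix.SpecialLinearGroup.coe_pow, h]
      simp [Matrix.SpecialLinearGroup.coe_neg]
  obtain ⟨e, he1, hMne⟩ : ∃ e : ℂ, (e = 1 ∨ e = -1) ∧ M ^ n = e • 1 := by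
    rcases hMn with h | h
    · exact ⟨1, Or.inl rfl, h⟩
    · exact ⟨-1, Or.inr rfl, h⟩
  have hkey : (η ^ n) • (1 : Matrix (Fin 2) (Fin 2) ℂ) + ((n : ℂ) * η ^ (n + 1)) • N = e • 1 := by
    rw [← hMk n, hMne]
  have htrkey : η ^ n = e := by
    have h2 := congrArg Matrix.trace hkey
    simp only [Matrix.trace_add, Matrix.trace_smul, hNtr, Matrix.trace_one, smul_eq_mul,
      mul_zero, add_zero, Fintype.card_fin, Nat.cast_ofNat] at h2
    exact mul_right_cancel₀ two_ne_zero (by linear_combination h2)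
  rw [htrkey] at hkey
  have hX : ((n : ℂ) * η ^ (n + 1)) • N = 0 := by
    have := hkey
    nth_rewrite 2 [show (e • (1:Matrix (Fin 2) (Fin 2) ℂ)) = e • 1 + 0 by rw [add_zero]] at this
    exact add_left_cancel this
  have hcoef : ((n : ℂ) * η ^ (n + 1)) ≠ 0 := by
    apply mul_ne_zero
    · exact Nat.cast_ne_zero.mpr (by omega)
    · exact pow_ne_zero _ hη0
  have hN0 : N = 0 := by
    rcases smul_eq_zero.mp hX with h | h
    · exact absurd h hcoef
    · exact h
  have hM1 : M = η • 1 := by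
    have : M - η • 1 = 0 := hN0
    linear_combination (norm := abel) this
  have hA1 : A = 1 ∨ A = -1 := by
    rcases hη with h | h
    · left
      apply Subtype.ext
      rw [Matrix.SpecialLinearGroup.coe_one]
      rw [show ((A:Matrix (Fin 2) (Fin 2) ℂ)) = M from rfl, hM1, h, one_smul]
    · right
      apply Subtype.ext
      rw [Matrix.SpecialLinearGroup.coe_neg, Matrix.SpecialLinearGroup.coe_one]
      rw [show ((A:Matrix (Fin 2) (Fin 2) ℂ)) = M from rfl, hM1, h]
      simp
  have := hA.2 1 le_rfl (by omega)
  rcases hA1 with h | h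
  · exact this.1 (by rw [pow_one, h])
  · exact this.2 (by rw [pow_one, h])

open Complex in
lemma exists_theta (A : SL2C) (n : ℕ) (hn : 3 ≤ n) (hA : IsEllipticOfOrder A n) :
    ∃ θ : ℝ, Matrix.trace (A : Matrix (Fin 2) (Fin 2) ℂ) = ((2 * Real.cos θ : ℝ) : ℂ) ∧
      Real.cos θ ^ 2 ≤ Real.cos (π / n) ^ 2 := by
  set M : Matrix (Fin 2) (Fin 2) ℂ := ↑A with hM
  set t : ℂ := Matrix.trace M with ht
  have hn0 : (n:ℝ) ≠ 0 := by exact_mod_cast (by omega : n ≠ 0)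
  have hnC : (n:ℂ) ≠ 0 := by exact_mod_cast (by omega : n ≠ 0)
  have hd : M 0 0 * M 1 1 - M 0 1 * M 1 0 = 1 := by
    have := A.prop; rwa [Matrix.det_fin_two] at this
  have ht2 : t ≠ 2 := fun h =>
    trace_ne_pm_two A n hn hA 1 (Or.inl rfl) (by rw [← hM, ← ht, h]; ring)
  have htm2 : t ≠ -2 := fun h =>
    trace_ne_pm_two A n hn hA (-1) (Or.inr rfl) (by rw [← hM, ← ht, h]; ring)
  obtain ⟨δ, hδ⟩ := IsAlgClosed.exists_pow_nat_eq (t ^ 2 - 4) (n := 2) (by norm_num)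
  set l : ℂ := (t + δ) / 2 with hl
  have hroot : l ^ 2 - t * l + 1 = 0 := by
    rw [hl]; linear_combination (1/4 : ℂ) * hδ
  have hl0 : l ≠ 0 := by intro h; rw [h] at hroot; simp at hroot
  have hl1 : l ≠ 1 := by intro h; rw [h] at hroot; exact ht2 (by linear_combination -hroot)
  have hlm1 : l ≠ -1 := by intro h; rw [h] at hroot; exact htm2 (by linear_combination hroot)
  have htr2 : t = M 0 0 + M 1 1 := by rw [ht, Matrix.trace_fin_two]
  have hdet0 : Matrix.det (M - l • 1) = 0 := by
    rw [Matrix.det_fin_two]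
    simp only [Matrix.sub_apply, Matrix.smul_apply, Matrix.one_apply_eq, Matrix.one_apply_ne,
      Matrix.one_apply, smul_eq_mul]
    norm_num
    linear_combination hd + hroot + l * htr2
  obtain ⟨v, hv0, hv⟩ := Matrix.exists_mulVec_eq_zero_iff.mpr hdet0
  have hMv : M.mulVec v = l • v := by
    rw [Matrix.sub_mulVec, Matrix.smul_mulVec, Matrix.one_mulVec] at hv
    exact sub_eq_zero.mp hv
  have hpow : ∀ k : ℕ, (M ^ k).mulVec v = (l ^ k) • v := by
    intro k
    induction k with
    | zero => simp
    | succ k ih =>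
      rw [pow_succ, ← Matrix.mulVec_mulVec, hMv, Matrix.mulVec_smul, ih, smul_smul, pow_succ]
      ring_nf
  have hvne : ∀ c : ℂ, c • v = 0 → c = 0 := fun c hc => by
    rcases smul_eq_zero.mp hc with h | h
    · exact h
    · exact absurd h hv0
  have hen : l ^ n = 1 ∨ l ^ n = -1 := by
    rcases hA.1 with h | h
    · left
      have hMn : M ^ n = 1 := by rw [hM, ← Matrix.SpecialLinearGroup.coe_pow, h]; rfl
      have h2 := hpow n
      rw [hMn, Matrix.one_mulVec] at h2
      have := hvne (l ^ n - 1) (by rw [sub_smul, one_smul, ← h2, sub_self])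
      linear_combination this
    · right
      have hMn : M ^ n = -1 := by
        rw [hM, ← Matrix.SpecialLinearGroup.coe_pow, h, Matrix.SpecialLinearGroup.coe_neg]
        rfl
      have h2 := hpow n
      rw [hMn, Matrix.neg_mulVec, Matrix.one_mulVec] at h2
      have := hvne (l ^ n + 1) (by rw [add_smul, one_smul, ← h2, neg_add_cancel])
      linear_combination this
  have hl2n : l ^ (2 * n) = 1 := by
    rw [mul_comm, pow_mul]
    rcases hen with h | h <;> rw [h] <;> norm_num
  have habs : ‖l‖ = 1 := by
    exact Complex.norm_eq_one_of_pow_eq_one hl2n (by omega)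
  obtain ⟨θ, hθ⟩ := (Complex.norm_eq_one_iff l).mp habs
  have htl : t = l + l⁻¹ := by
    field_simp
    linear_combination -hroot
  have hcos : t = ((2 * Real.cos θ : ℝ) : ℂ) := by
    rw [htl, ← hθ, ← Complex.exp_neg]
    rw [show -(↑θ * I) = ((-θ : ℝ) : ℂ) * I by push_cast; ring]
    rw [Complex.exp_mul_I, Complex.exp_mul_I]
    push_cast
    rw [Complex.cos_neg, Complex.sin_neg]
    ring
  have hexp2n : Complex.exp (((2 * n * θ : ℝ) : ℂ) * I) = 1 := by
    have h1 : Complex.exp (↑θ * I) ^ (2 * n) = 1 := by rw [hθ]; exact hl2n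
    rw [← Complex.exp_nat_mul] at h1
    rw [← h1]
    congr 1
    push_cast
    ring
  obtain ⟨m, hm⟩ := Complex.exp_eq_one_iff.mp hexp2n
  have hreal : (2 * n * θ : ℝ) = m * (2 * π) := by
    have h' : ((2 * n * θ : ℝ) : ℂ) = ((m * (2 * π) : ℝ) : ℂ) :=
      mul_right_cancel₀ Complex.I_ne_zero (by push_cast at hm ⊢; linear_combination hm)
    exact_mod_cast h'
  have hθval : θ = π * m / n := by
    field_simp
    linarith [hreal]
  have hndvd : ¬ (n : ℤ) ∣ m := by
    rintro ⟨q, rfl⟩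
    have hq : (↑θ * I : ℂ) = (q : ℂ) * (π * I) := by
      rw [hθval]
      push_cast
      field_simp [hnC]
    have hlq : l = ((-1 : ℂ)) ^ q := by
      rw [← hθ, hq, Complex.exp_int_mul, Complex.exp_pi_mul_I]
    rcases Int.even_or_odd q with h | h
    · exact hl1 (by rw [hlq, h.neg_one_zpow])
    · exact hlm1 (by rw [hlq, h.neg_one_zpow])
  refine ⟨θ, hcos, ?_⟩
  rw [hθval]
  exact cos_sq_le_aux n hn m hndvd

/-- Lemma 2.9: for `A` elliptic of order `n ≥ 3`,
`m(A)² sin²(π/n) ≤ |tr²A - 4| (‖A‖² - 2 cos²(π/n))`. -/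
theorem elliptic_axis_bound (A : SL2C) (n : ℕ) (hn : 3 ≤ n)
    (hA : IsEllipticOfOrder A n) :
    fnorm ((A : Matrix (Fin 2) (Fin 2) ℂ) - ((A⁻¹ : SL2C) : Matrix (Fin 2) (Fin 2) ℂ)) ^ 2 *
        Real.sin (π / n) ^ 2 ≤
      ‖(Matrix.trace (A : Matrix (Fin 2) (Fin 2) ℂ)) ^ 2 - 4‖ *
        (fnorm (A : Matrix (Fin 2) (Fin 2) ℂ) ^ 2 - 2 * Real.cos (π / n) ^ 2) := by
  obtain ⟨θ, htr, hcos2⟩ := exists_theta A n hn hA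
  set M : Matrix (Fin 2) (Fin 2) ℂ := (A : Matrix (Fin 2) (Fin 2) ℂ) with hM
  set a := M 0 0 with ha
  set b := M 0 1 with hb
  set c := M 1 0 with hc
  set d := M 1 1 with hd'
  have hd : a * d - b * c = 1 := by
    have := A.prop; rwa [Matrix.det_fin_two] at this
  have hta : a + d = ((2 * Real.cos θ : ℝ) : ℂ) := by
    rw [← htr, Matrix.trace_fin_two]
  have hinv : ((A⁻¹ : SL2C) : Matrix (Fin 2) (Fin 2) ℂ) = !![d, -b; -c, a] := by
    rw [Matrix.SpecialLinearGroup.coe_inv, Matrix.adjugate_fin_two]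
  have hm2 : fnorm (M - ((A⁻¹ : SL2C) : Matrix (Fin 2) (Fin 2) ℂ)) ^ 2 =
      ‖a - d‖^2 + ‖b + b‖^2 + ‖c + c‖^2 + ‖d - a‖^2 := by
    rw [fnorm_sq_eq, hinv]
    simp [Matrix.sub_apply, sub_neg_eq_add]
    rfl
  have hN : fnorm M ^ 2 = ‖a‖^2 + ‖b‖^2 + ‖c‖^2 + ‖d‖^2 := fnorm_sq_eq M
  have hpar : ‖a - d‖^2 + ‖a + d‖^2 = 2*‖a‖^2 + 2*‖d‖^2 := by
    simp only [Complex.sq_norm, Complex.normSq_apply,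
      Complex.sub_re, Complex.sub_im, Complex.add_re, Complex.add_im]
    ring
  have hbb : ‖b + b‖^2 = 4 * ‖b‖^2 := by
    rw [show b + b = (2:ℂ) * b by ring, norm_mul]
    simp
    ring
  have hcc : ‖c + c‖^2 = 4 * ‖c‖^2 := by
    rw [show c + c = (2:ℂ) * c by ring, norm_mul]
    simp
    ring
  have hda : ‖d - a‖ = ‖a - d‖ := norm_sub_rev d a
  have hsum : ‖a + d‖^2 = 4 * Real.cos θ ^ 2 := by
    rw [hta, Complex.norm_real, Real.norm_eq_abs, sq_abs]
    ring
  have habs4 : ‖(Matrix.trace M)^2 - 4‖ = 4 - 4 * Real.cos θ ^ 2 := by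
    have h1 : (Matrix.trace M)^2 - 4 = (((2 * Real.cos θ)^2 - 4 : ℝ) : ℂ) := by
      rw [htr]; push_cast; ring
    rw [h1, Complex.norm_real, Real.norm_eq_abs, abs_of_nonpos]
    · ring
    · nlinarith [Real.cos_sq_le_one θ]
  have hge2 : 2 ≤ ‖a‖^2 + ‖b‖^2 + ‖c‖^2 + ‖d‖^2 := by
    have h1 : ‖a * d - b * c‖ = 1 := by rw [hd, norm_one]
    have h2 : ‖a * d - b * c‖ ≤ ‖a‖*‖d‖ + ‖b‖*‖c‖ := by
      refine (norm_sub_le _ _).trans ?_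
      rw [norm_mul, norm_mul]
    nlinarith [sq_nonneg (‖a‖ - ‖d‖), sq_nonneg (‖b‖ - ‖c‖)]
  have hsc : Real.sin (π/n)^2 = 1 - Real.cos (π/n)^2 := Real.sin_sq (π/n)
  have hcos1 : Real.cos (π/n)^2 ≤ 1 := Real.cos_sq_le_one _
  rw [hm2, hN, habs4, hda]
  nlinarith [mul_nonneg (by linarith : (0:ℝ) ≤ ‖a‖^2 + ‖b‖^2 + ‖c‖^2 + ‖d‖^2 - 2)
      (by linarith : (0:ℝ) ≤ Real.cos (π/n)^2 - Real.cos θ ^2),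
    sq_nonneg (‖a - d‖), sq_nonneg (Real.sin (π/n))]

end
end

section
/- For all A, B ∈ SL(2,ℂ) with A ≠ ±1 and B ≠ ±1: 4·max{‖A‖², ‖B‖²} ≥ |tr A|² + |tr B|² + √(‖A − A⁻¹‖² · ‖B − B⁻¹‖² + (|tr A|² − |tr B|²)²). -/
open Matrix Real

noncomputable section

lemma fnorm_sq (A : Matrix (Fin 2) (Fin 2) ℂ) :
    fnorm A ^ 2 = ‖A 0 0‖ ^ 2 + ‖A 0 1‖ ^ 2
      + ‖A 1 0‖ ^ 2 + ‖A 1 1‖ ^ 2 := by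
  have h : fnorm A = Real.sqrt (‖A 0 0‖ ^ 2 + ‖A 0 1‖ ^ 2
      + ‖A 1 0‖ ^ 2 + ‖A 1 1‖ ^ 2) := by
    unfold fnorm
    rw [Matrix.frobenius_norm_def, Real.sqrt_eq_rpow]
    congr 1
    simp [Fin.sum_univ_two, Real.rpow_two]
    ring
  rw [h, Real.sq_sqrt (by positivity)]

lemma trace_sq_le (A : Matrix (Fin 2) (Fin 2) ℂ) :
    ‖Matrix.trace A‖ ^ 2 ≤ 2 * fnorm A ^ 2 := by
  rw [fnorm_sq, Matrix.trace_fin_two]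
  simp only [Complex.sq_norm, Complex.normSq_apply, Complex.add_re, Complex.add_im]
  nlinarith [sq_nonneg ((A 0 0).re - (A 1 1).re), sq_nonneg ((A 0 0).im - (A 1 1).im),
    Complex.normSq_nonneg (A 0 1), Complex.normSq_nonneg (A 1 0),
    Complex.sq_norm (A 0 1), Complex.sq_norm (A 1 0), sq_nonneg (‖A 0 1‖),
    sq_nonneg (‖A 1 0‖)]

lemma m_sq (A : SL2C) :
    fnorm ((A : Matrix (Fin 2) (Fin 2) ℂ) - ((A⁻¹ : SL2C) : Matrix (Fin 2) (Fin 2) ℂ)) ^ 2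
      = 4 * fnorm (A : Matrix (Fin 2) (Fin 2) ℂ) ^ 2
        - 2 * ‖Matrix.trace (A : Matrix (Fin 2) (Fin 2) ℂ)‖ ^ 2 := by
  rw [Matrix.SpecialLinearGroup.coe_inv, Matrix.adjugate_fin_two]
  rw [fnorm_sq, fnorm_sq, Matrix.trace_fin_two]
  simp only [Matrix.sub_apply]
  norm_num [Matrix.cons_val_zero, Matrix.cons_val_one, Matrix.head_cons, Matrix.of_apply,
    Matrix.cons_val', Matrix.empty_val', Matrix.cons_val_fin_one]
  simp only [Complex.sq_norm, Complex.normSq_apply, Complex.sub_re, Complex.sub_im,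
    Complex.add_re, Complex.add_im, Complex.neg_re, Complex.neg_im]
  ring


/-- Lemma 2.15, inequality (2.16). -/
theorem displacement_lower_bound (A B : SL2C)
    (hA1 : A ≠ 1) (hA2 : A ≠ -1) (hB1 : B ≠ 1) (hB2 : B ≠ -1) :
    4 * max (fnorm (A : Matrix (Fin 2) (Fin 2) ℂ) ^ 2)
        (fnorm (B : Matrix (Fin 2) (Fin 2) ℂ) ^ 2) ≥
      ‖Matrix.trace (A : Matrix (Fin 2) (Fin 2) ℂ)‖ ^ 2 +
        ‖Matrix.trace (B : Matrix (Fin 2) (Fin 2) ℂ)‖ ^ 2 +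
        Real.sqrt
          (fnorm ((A : Matrix (Fin 2) (Fin 2) ℂ) -
              ((A⁻¹ : SL2C) : Matrix (Fin 2) (Fin 2) ℂ)) ^ 2 *
            fnorm ((B : Matrix (Fin 2) (Fin 2) ℂ) -
              ((B⁻¹ : SL2C) : Matrix (Fin 2) (Fin 2) ℂ)) ^ 2 +
            (‖Matrix.trace (A : Matrix (Fin 2) (Fin 2) ℂ)‖ ^ 2 -
              ‖Matrix.trace (B : Matrix (Fin 2) (Fin 2) ℂ)‖ ^ 2) ^ 2) := by
  set x := fnorm (A : Matrix (Fin 2) (Fin 2) ℂ) ^ 2 with hx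
  set y := fnorm (B : Matrix (Fin 2) (Fin 2) ℂ) ^ 2 with hy
  set p := ‖Matrix.trace (A : Matrix (Fin 2) (Fin 2) ℂ)‖ ^ 2 with hp
  set q := ‖Matrix.trace (B : Matrix (Fin 2) (Fin 2) ℂ)‖ ^ 2 with hq
  set u := fnorm ((A : Matrix (Fin 2) (Fin 2) ℂ) - ((A⁻¹ : SL2C) : Matrix (Fin 2) (Fin 2) ℂ)) ^ 2
    with hu
  set v := fnorm ((B : Matrix (Fin 2) (Fin 2) ℂ) - ((B⁻¹ : SL2C) : Matrix (Fin 2) (Fin 2) ℂ)) ^ 2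
    with hv
  have hu' : u = 4 * x - 2 * p := m_sq A
  have hv' : v = 4 * y - 2 * q := m_sq B
  have hpx : p ≤ 2 * x := trace_sq_le _
  have hqy : q ≤ 2 * y := trace_sq_le _
  have hu0 : 0 ≤ u := sq_nonneg _
  have hv0 : 0 ≤ v := sq_nonneg _
  set M := 4 * max x y with hM
  have hxM : 4 * x ≤ M := by
    simp only [hM]; nlinarith [le_max_left x y]
  have hyM : 4 * y ≤ M := by
    simp only [hM]; nlinarith [le_max_right x y]
  have hMpq : p + q ≤ M := by nlinarith
  have hsqrt : Real.sqrt (u * v + (p - q) ^ 2) ≤ M - p - q := by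
    have h1 : u * v + (p - q) ^ 2 ≤ (M - p - q) ^ 2 := by
      have hup : u ≤ M - 2 * p := by linarith
      have hvq : v ≤ M - 2 * q := by linarith
      nlinarith [mul_le_mul hup hvq hv0 (by linarith : (0:ℝ) ≤ M - 2 * p)]
    calc Real.sqrt (u * v + (p - q) ^ 2) ≤ Real.sqrt ((M - p - q) ^ 2) :=
          Real.sqrt_le_sqrt h1
      _ = M - p - q := Real.sqrt_sq (by linarith)
  linarith


end
end

section
/- For all A, B ∈ SL(2,ℂ) with A ≠ ±1 and B ≠ ±1: ‖A − A⁻¹‖² · ‖B − B⁻¹‖² ≥ 2·(|4·γ(A,B) + β(A)·β(B)| + |4·γ(A,B)| + |β(A)·β(B)|). -/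
open Matrix Real

noncomputable section

set_option maxHeartbeats 1000000 in
private lemma gm_cs3 (p1 p2 p3 q1 q2 q3 : ℝ) :
    (p1*q1+p2*q2+p3*q3)^2 ≤ (p1^2+p2^2+p3^2)*(q1^2+q2^2+q3^2) := by
  nlinarith [sq_nonneg (p1*q2-p2*q1), sq_nonneg (p1*q3-p3*q1), sq_nonneg (p2*q3-p3*q2)]

set_option maxHeartbeats 1000000 in
private lemma gm_scalar_core (na nb q r z : ℝ) (hna : 0 ≤ na) (hnb : 0 ≤ nb)
    (hq : 0 ≤ q) (hr : 0 ≤ r) (hq2 : q^2 ≤ na^2) (hr2 : r^2 ≤ nb^2)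
    (hz : (4*z)^2 ≤ (na^2 - q^2)*(nb^2 - r^2)) :
    -(4*z) + q*r ≤ na*nb := by
  have hq' : q ≤ na := by nlinarith
  have hr' : r ≤ nb := by nlinarith
  have hqr : q*r ≤ na*nb := mul_le_mul hq' hr' hr hna
  have h16 : (4*z)^2 ≤ (na*nb - q*r)^2 := by nlinarith [sq_nonneg (na*r - nb*q)]
  nlinarith [h16, hqr]

set_option maxHeartbeats 1000000 in
private lemma gm_herm_lagrange (a1 a2 a3 b1 b2 b3 : ℂ) :
    (‖a1‖ ^ 2 + ‖a2‖ ^ 2 + ‖a3‖ ^ 2) *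
      (‖b1‖ ^ 2 + ‖b2‖ ^ 2 + ‖b3‖ ^ 2)
    = ‖a1 * (starRingEnd ℂ) b1 + a2 * (starRingEnd ℂ) b2
        + a3 * (starRingEnd ℂ) b3‖ ^ 2
      + (‖a2*b3 - a3*b2‖ ^ 2 + ‖a3*b1 - a1*b3‖ ^ 2
        + ‖a1*b2 - a2*b1‖ ^ 2) := by
  simp only [Complex.sq_norm, Complex.normSq_apply, Complex.mul_re, Complex.mul_im,
    Complex.add_re, Complex.add_im, Complex.sub_re, Complex.sub_im, Complex.conj_re,
    Complex.conj_im]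
  ring

set_option maxHeartbeats 1000000 in
private lemma gm_e1_lemma (a1 a2 a3 : ℂ) :
    ‖a1^2+a2^2+a3^2‖ ^ 2
    = (‖a1‖ ^ 2 + ‖a2‖ ^ 2 + ‖a3‖ ^ 2)^2
      - 4*((a2.re*a3.im - a3.re*a2.im)^2 + (a3.re*a1.im - a1.re*a3.im)^2
        + (a1.re*a2.im - a2.re*a1.im)^2) := by
  simp only [Complex.sq_norm]
  simp only [Complex.normSq_apply, pow_two, Complex.mul_re, Complex.mul_im,
    Complex.add_re, Complex.add_im]
  ring

set_option maxHeartbeats 1000000 in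
private lemma gm_e3_lemma (a1 a2 a3 b1 b2 b3 : ℂ) :
    ‖a1*b1+a2*b2+a3*b3‖ ^ 2
    = ‖a1 * (starRingEnd ℂ) b1 + a2 * (starRingEnd ℂ) b2
        + a3 * (starRingEnd ℂ) b3‖ ^ 2
      - 4*((a2.re*a3.im - a3.re*a2.im)*(b2.re*b3.im - b3.re*b2.im)
        + (a3.re*a1.im - a1.re*a3.im)*(b3.re*b1.im - b1.re*b3.im)
        + (a1.re*a2.im - a2.re*a1.im)*(b1.re*b2.im - b2.re*b1.im)) := by
  simp only [Complex.sq_norm, Complex.normSq_apply, Complex.mul_re, Complex.mul_im,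
    Complex.add_re, Complex.add_im, Complex.conj_re, Complex.conj_im]
  ring

set_option maxHeartbeats 1000000 in
private lemma gm_key_vec (a1 a2 a3 b1 b2 b3 : ℂ) :
    ‖a1*b1+a2*b2+a3*b3‖ ^ 2
      + ‖(a1*b1+a2*b2+a3*b3)^2 - (a1^2+a2^2+a3^2)*(b1^2+b2^2+b3^2)‖
      + ‖(a1^2+a2^2+a3^2)*(b1^2+b2^2+b3^2)‖
    ≤ 2 * ((‖a1‖ ^ 2 + ‖a2‖ ^ 2 + ‖a3‖ ^ 2) *
        (‖b1‖ ^ 2 + ‖b2‖ ^ 2 + ‖b3‖ ^ 2)) := by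
  have hII := gm_herm_lagrange a1 a2 a3 b1 b2 b3
  have he1 := gm_e1_lemma a1 a2 a3
  have he2 := gm_e1_lemma b1 b2 b3
  have he3 := gm_e3_lemma a1 a2 a3 b1 b2 b3
  set Na := ‖a1‖ ^ 2 + ‖a2‖ ^ 2 + ‖a3‖ ^ 2 with hNa
  set Nb := ‖b1‖ ^ 2 + ‖b2‖ ^ 2 + ‖b3‖ ^ 2 with hNb
  set H := a1 * (starRingEnd ℂ) b1 + a2 * (starRingEnd ℂ) b2 + a3 * (starRingEnd ℂ) b3 with hH
  have hNa0 : 0 ≤ Na := by positivity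
  have hNb0 : 0 ≤ Nb := by positivity
  have hD : ‖(a1*b1+a2*b2+a3*b3)^2 - (a1^2+a2^2+a3^2)*(b1^2+b2^2+b3^2)‖
      ≤ Na * Nb - ‖H‖ ^ 2 := by
    have hcross : (a1*b1+a2*b2+a3*b3)^2 - (a1^2+a2^2+a3^2)*(b1^2+b2^2+b3^2)
        = -((a2*b3 - a3*b2)^2 + (a3*b1 - a1*b3)^2 + (a1*b2 - a2*b1)^2) := by ring
    rw [hcross, norm_neg]
    have h1 : ‖(a2*b3 - a3*b2)^2 + (a3*b1 - a1*b3)^2 + (a1*b2 - a2*b1)^2‖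
        ≤ ‖a2*b3 - a3*b2‖ ^ 2 + ‖a3*b1 - a1*b3‖ ^ 2
          + ‖a1*b2 - a2*b1‖ ^ 2 := by
      refine le_trans (norm_add_le _ _) ?_
      have h2 := norm_add_le ((a2*b3 - a3*b2)^2) ((a3*b1 - a1*b3)^2)
      rw [norm_pow, norm_pow] at h2
      have h3 : ‖(a1*b2 - a2*b1)^2‖ = ‖a1*b2 - a2*b1‖ ^ 2 := norm_pow _ _
      rw [h3]
      linarith
    linarith
  have hL2 : ‖a1*b1+a2*b2+a3*b3‖ ^ 2
      + ‖(a1^2+a2^2+a3^2)*(b1^2+b2^2+b3^2)‖ ≤ Na * Nb + ‖H‖ ^ 2 := by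
    set p1 := a2.re*a3.im - a3.re*a2.im
    set p2 := a3.re*a1.im - a1.re*a3.im
    set p3 := a1.re*a2.im - a2.re*a1.im
    set q1 := b2.re*b3.im - b3.re*b2.im
    set q2 := b3.re*b1.im - b1.re*b3.im
    set q3 := b1.re*b2.im - b2.re*b1.im
    set z := p1*q1 + p2*q2 + p3*q3 with hzdef
    have e4 : (4*z)^2 ≤ (Na^2 - ‖a1^2+a2^2+a3^2‖^2)
        * (Nb^2 - ‖b1^2+b2^2+b3^2‖^2) := by
      rw [he1, he2]
      have h := gm_cs3 p1 p2 p3 q1 q2 q3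
      nlinarith [h]
    have hcore := gm_scalar_core Na Nb (‖a1^2+a2^2+a3^2‖)
      (‖b1^2+b2^2+b3^2‖) z hNa0 hNb0 (norm_nonneg _) (norm_nonneg _)
      (by rw [he1]; linarith [sq_nonneg p1, sq_nonneg p2, sq_nonneg p3])
      (by rw [he2]; linarith [sq_nonneg q1, sq_nonneg q2, sq_nonneg q3]) e4
    rw [norm_mul, he3]
    linarith
  linarith

private lemma gm_fnorm_sq (M : Matrix (Fin 2) (Fin 2) ℂ) :
    fnorm M ^ 2 = ∑ i, ∑ j, ‖M i j‖ ^ 2 := by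
  have h : fnorm M = (∑ i, ∑ j, ‖M i j‖ ^ (2 : ℝ)) ^ (1/2 : ℝ) :=
    Matrix.frobenius_norm_def M
  rw [h, ← Real.rpow_natCast _ 2, ← Real.rpow_mul (by positivity)]
  norm_num

/-- Lemma 2.15, inequality (2.17):
`m(A)² m(B)² ≥ 2(|4γ + β(A)β(B)| + |4γ| + |β(A)β(B)|)`. -/
theorem matrix_norm_commutator_bound (A B : SL2C)
    (hA1 : A ≠ 1) (hA2 : A ≠ -1) (hB1 : B ≠ 1) (hB2 : B ≠ -1) :
    fnorm ((A : Matrix (Fin 2) (Fin 2) ℂ) - ((A⁻¹ : SL2C) : Matrix (Fin 2) (Fin 2) ℂ)) ^ 2 *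
        fnorm ((B : Matrix (Fin 2) (Fin 2) ℂ) - ((B⁻¹ : SL2C) : Matrix (Fin 2) (Fin 2) ℂ)) ^ 2 ≥
      2 * (‖4 * γp A B + βp A * βp B‖ + ‖4 * γp A B‖ +
        ‖βp A * βp B‖) := by
  obtain ⟨a, b, c, d, hAm⟩ : ∃ a b c d : ℂ, (A : Matrix (Fin 2) (Fin 2) ℂ) = !![a,b;c,d] :=
    ⟨_,_,_,_, Matrix.eta_fin_two _⟩
  obtain ⟨e, f, g, k, hBm⟩ : ∃ e f g k : ℂ, (B : Matrix (Fin 2) (Fin 2) ℂ) = !![e,f;g,k] :=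
    ⟨_,_,_,_, Matrix.eta_fin_two _⟩
  have hdA : a*d - b*c = 1 := by
    have h2 := A.2
    rw [hAm, Matrix.det_fin_two_of] at h2
    exact h2
  have hdB : e*k - f*g = 1 := by
    have h2 := B.2
    rw [hBm, Matrix.det_fin_two_of] at h2
    exact h2
  have hAi : ((A⁻¹ : SL2C) : Matrix (Fin 2) (Fin 2) ℂ) = !![d,-b;-c,a] := by
    rw [Matrix.SpecialLinearGroup.coe_inv, hAm, Matrix.adjugate_fin_two_of]
  have hBi : ((B⁻¹ : SL2C) : Matrix (Fin 2) (Fin 2) ℂ) = !![k,-f;-g,e] := by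
    rw [Matrix.SpecialLinearGroup.coe_inv, hBm, Matrix.adjugate_fin_two_of]
  have E1 : fnorm ((A : Matrix (Fin 2) (Fin 2) ℂ) - ((A⁻¹ : SL2C) : Matrix (Fin 2) (Fin 2) ℂ)) ^ 2
      = (‖2*(a-d)‖ ^ 2 + ‖2*(b+c)‖ ^ 2
        + ‖2*Complex.I*(b-c)‖ ^ 2) / 2 := by
    rw [hAm, hAi, gm_fnorm_sq]
    simp only [Fin.sum_univ_two, Matrix.sub_apply, Matrix.of_apply, Matrix.cons_val',
      Matrix.cons_val_zero, Matrix.cons_val_one, Matrix.head_cons, Matrix.head_fin_const,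
      Matrix.empty_val', Matrix.cons_val_fin_one]
    simp only [Complex.sq_norm, Complex.normSq_apply, Complex.mul_re, Complex.mul_im,
      Complex.add_re, Complex.add_im, Complex.sub_re, Complex.sub_im, Complex.I_re,
      Complex.I_im, Complex.re_ofNat, Complex.im_ofNat, Complex.neg_re, Complex.neg_im]
    ring
  have E2 : fnorm ((B : Matrix (Fin 2) (Fin 2) ℂ) - ((B⁻¹ : SL2C) : Matrix (Fin 2) (Fin 2) ℂ)) ^ 2
      = (‖2*(e-k)‖ ^ 2 + ‖2*(f+g)‖ ^ 2
        + ‖2*Complex.I*(f-g)‖ ^ 2) / 2 := by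
    rw [hBm, hBi, gm_fnorm_sq]
    simp only [Fin.sum_univ_two, Matrix.sub_apply, Matrix.of_apply, Matrix.cons_val',
      Matrix.cons_val_zero, Matrix.cons_val_one, Matrix.head_cons, Matrix.head_fin_const,
      Matrix.empty_val', Matrix.cons_val_fin_one]
    simp only [Complex.sq_norm, Complex.normSq_apply, Complex.mul_re, Complex.mul_im,
      Complex.add_re, Complex.add_im, Complex.sub_re, Complex.sub_im, Complex.I_re,
      Complex.I_im, Complex.re_ofNat, Complex.im_ofNat, Complex.neg_re, Complex.neg_im]
    ring
  have hbA : βp A = (4*(a-d)^2 + 4*(b+c)^2 - 4*(b-c)^2) / 4 := by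
    rw [βp, hAm, Matrix.trace_fin_two_of]
    linear_combination (4:ℂ) * hdA
  have hbB : βp B = (4*(e-k)^2 + 4*(f+g)^2 - 4*(f-g)^2) / 4 := by
    rw [βp, hBm, Matrix.trace_fin_two_of]
    linear_combination (4:ℂ) * hdB
  have hga : γp A B = ((4*(a-d)*(e-k) + 4*(b+c)*(f+g) - 4*(b-c)*(f-g))^2
      - (4*(a-d)^2 + 4*(b+c)^2 - 4*(b-c)^2) * (4*(e-k)^2 + 4*(f+g)^2 - 4*(f-g)^2))/64 := by
    rw [γp]
    rw [show ((A * B * A⁻¹ * B⁻¹ : SL2C) : Matrix (Fin 2) (Fin 2) ℂ)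
      = (A : Matrix (Fin 2) (Fin 2) ℂ) * (B : Matrix (Fin 2) (Fin 2) ℂ)
        * ((A⁻¹ : SL2C) : Matrix (Fin 2) (Fin 2) ℂ) * ((B⁻¹ : SL2C) : Matrix (Fin 2) (Fin 2) ℂ)
      by simp]
    rw [hAm, hBm, hAi, hBi]
    simp only [Matrix.mul_fin_two, Matrix.trace_fin_two_of]
    linear_combination (2*(e*k - f*g) : ℂ) * hdA + (2:ℂ) * hdB
  -- the key vector inequality, with I-free bridges
  have hkey := gm_key_vec (2*(a-d)) (2*(b+c)) (2*Complex.I*(b-c))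
    (2*(e-k)) (2*(f+g)) (2*Complex.I*(f-g))
  have hP : 2*(a-d)*(2*(e-k)) + 2*(b+c)*(2*(f+g)) + 2*Complex.I*(b-c)*(2*Complex.I*(f-g))
      = 4*(a-d)*(e-k) + 4*(b+c)*(f+g) - 4*(b-c)*(f-g) := by
    linear_combination (4*(b-c)*(f-g) : ℂ) * Complex.I_sq
  have hQ : (2*(a-d))^2 + (2*(b+c))^2 + (2*Complex.I*(b-c))^2
      = 4*(a-d)^2 + 4*(b+c)^2 - 4*(b-c)^2 := by
    linear_combination (4*(b-c)^2 : ℂ) * Complex.I_sq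
  have hR : (2*(e-k))^2 + (2*(f+g))^2 + (2*Complex.I*(f-g))^2
      = 4*(e-k)^2 + 4*(f+g)^2 - 4*(f-g)^2 := by
    linear_combination (4*(f-g)^2 : ℂ) * Complex.I_sq
  rw [hP, hQ, hR] at hkey
  -- rewrite the right-hand side
  have h1 : 4 * γp A B + βp A * βp B
      = (4*(a-d)*(e-k) + 4*(b+c)*(f+g) - 4*(b-c)*(f-g))^2 / 16 := by
    rw [hga, hbA, hbB]; ring
  have h2 : 4 * γp A B = ((4*(a-d)*(e-k) + 4*(b+c)*(f+g) - 4*(b-c)*(f-g))^2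
      - (4*(a-d)^2 + 4*(b+c)^2 - 4*(b-c)^2) * (4*(e-k)^2 + 4*(f+g)^2 - 4*(f-g)^2)) / 16 := by
    rw [hga]; ring
  have h3 : βp A * βp B
      = (4*(a-d)^2 + 4*(b+c)^2 - 4*(b-c)^2) * (4*(e-k)^2 + 4*(f+g)^2 - 4*(f-g)^2) / 16 := by
    rw [hbA, hbB]; ring
  have habs : ∀ z : ℂ, ‖z / 16‖ = ‖z‖ / 16 := by
    intro z
    rw [norm_div]
    norm_num
  rw [ge_iff_le, E1, E2, h1, h2, h3, habs, habs, habs, norm_pow]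
  linarith [hkey]

end
end

section
/- Let A, H ∈ SL(2,ℂ) with A elliptic of order n ≥ 3 and H = C·A·C⁻¹ or H = −C·A·C⁻¹ for some C ∈ SL(2,ℂ) (so A and H are conjugate elliptics of order n). If the image in PSL(2,ℂ) of the subgroup generated by A and H is isomorphic to the symmetric group S₄, then γ(A,H) = −1 and β(A) = β(H) = −2. -/
open Matrix Real

noncomputable section

namespace SL2Aux

lemma ch2 (M : Matrix (Fin 2) (Fin 2) ℂ) :
    M * M = (Matrix.trace M) • M - (M.det) • 1 := by
  ext i j
  fin_cases i <;> fin_cases j <;>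
    simp [Matrix.mul_apply, Matrix.trace_fin_two, Fin.sum_univ_two, Matrix.det_fin_two,
      Matrix.one_apply] <;> ring

lemma fricke (A B : Matrix (Fin 2) (Fin 2) ℂ) (hA : A.det = 1) (hB : B.det = 1) :
    Matrix.trace (A * B * A.adjugate * B.adjugate) =
      (Matrix.trace A)^2 + (Matrix.trace B)^2 + (Matrix.trace (A*B))^2
        - Matrix.trace A * Matrix.trace B * Matrix.trace (A*B) - 2 := by
  rw [Matrix.det_fin_two] at hA hB
  rw [Matrix.adjugate_fin_two A, Matrix.adjugate_fin_two B]
  simp [Matrix.trace_fin_two, Matrix.mul_apply, Fin.sum_univ_two]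
  linear_combination ((A 0 0 + A 1 1)^2 - 2*(A 0 0 * A 1 1 - A 0 1 * A 1 0)) * hB
    + ((B 0 0 + B 1 1)^2 - 2) * hA

lemma sl2_scalar {X : SL2C} {c : ℂ} (h : (X : Matrix (Fin 2) (Fin 2) ℂ) = c • 1) :
    X = 1 ∨ X = -1 := by
  have hd : (X : Matrix (Fin 2) (Fin 2) ℂ).det = 1 := X.2
  rw [h] at hd
  simp [Matrix.det_smul] at hd
  rcases hd with h1 | h1 <;> subst h1
  · left; apply Subtype.coe_injective; simp at h; simp [h]
  · right; apply Subtype.coe_injective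
    show (X : Matrix (Fin 2) (Fin 2) ℂ) = ((-1 : SL2C) : Matrix (Fin 2) (Fin 2) ℂ)
    rw [show ((-1 : SL2C) : Matrix (Fin 2) (Fin 2) ℂ) = -((1:SL2C) : Matrix (Fin 2) (Fin 2) ℂ)
      from Matrix.SpecialLinearGroup.coe_neg 1, Matrix.SpecialLinearGroup.coe_one, h]
    simp

lemma entry00 {c : ℂ} (h : c • (1 : Matrix (Fin 2) (Fin 2) ℂ) = 0) : c = 0 := by
  have := congrFun (congrFun h 0) 0
  simpa using this

lemma sl2_combo {X : SL2C} {r c : ℂ} (h : r • (X : Matrix (Fin 2) (Fin 2) ℂ) = c • 1)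
    (hX1 : X ≠ 1) (hX1' : X ≠ -1) : r = 0 ∧ c = 0 := by
  by_cases hr : r = 0
  · subst hr
    rw [zero_smul] at h
    exact ⟨rfl, entry00 h.symm⟩
  · exfalso
    have hs : (X : Matrix (Fin 2) (Fin 2) ℂ) = (r⁻¹ * c) • 1 := by
      have := congrArg (fun N => r⁻¹ • N) h
      simpa [smul_smul, inv_mul_cancel₀ hr] using this
    rcases sl2_scalar hs with h' | h' <;> [exact hX1 h'; exact hX1' h']

lemma sl2_one_ne_neg_one : (1 : SL2C) ≠ -1 := by
  intro h
  have := congrArg (fun Y : SL2C => (Y : Matrix (Fin 2) (Fin 2) ℂ) 0 0) h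
  simp [Matrix.SpecialLinearGroup.coe_neg] at this
  norm_num at this

lemma sl2_center {X : SL2C} (h : X ∈ Subgroup.center SL2C) : X = 1 ∨ X = -1 := by
  obtain ⟨r, hr, hs⟩ := Matrix.SpecialLinearGroup.mem_center_iff.mp h
  apply sl2_scalar (c := r)
  rw [← hs, Matrix.smul_one_eq_diagonal]
  rfl

lemma sl2_center' {X : SL2C} (h : X = 1 ∨ X = -1) : X ∈ Subgroup.center SL2C := by
  rw [Subgroup.mem_center_iff]
  rcases h with h | h <;> subst h <;> intro g <;> simp [mul_neg, neg_mul]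

section powers
variable (X : SL2C)

lemma e2' : (X : Matrix (Fin 2) (Fin 2) ℂ) * X =
    (Matrix.trace (X : Matrix (Fin 2) (Fin 2) ℂ)) • (X : Matrix (Fin 2) (Fin 2) ℂ) - (1:ℂ) • 1 := by
  rw [ch2, X.2]

lemma e3' : ((X^3 : SL2C) : Matrix (Fin 2) (Fin 2) ℂ) =
    ((Matrix.trace (X : Matrix (Fin 2) (Fin 2) ℂ))^2 - 1) • (X : Matrix (Fin 2) (Fin 2) ℂ)
      - (Matrix.trace (X : Matrix (Fin 2) (Fin 2) ℂ)) • 1 := by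
  rw [Matrix.SpecialLinearGroup.coe_pow]
  have h4 : (X : Matrix (Fin 2) (Fin 2) ℂ)^3 = ((X : Matrix (Fin 2) (Fin 2) ℂ) * X) * X := by
    rw [pow_succ, pow_two]
  rw [h4, e2', sub_mul, smul_mul_assoc, e2', one_smul, one_mul]
  module

lemma e4' : ((X^4 : SL2C) : Matrix (Fin 2) (Fin 2) ℂ) =
    ((Matrix.trace (X : Matrix (Fin 2) (Fin 2) ℂ))^3
        - 2 * Matrix.trace (X : Matrix (Fin 2) (Fin 2) ℂ)) • (X : Matrix (Fin 2) (Fin 2) ℂ)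
      + (1 - (Matrix.trace (X : Matrix (Fin 2) (Fin 2) ℂ))^2) • 1 := by
  set M := (X : Matrix (Fin 2) (Fin 2) ℂ) with hM
  set t := Matrix.trace M with ht
  have h2 : M * M = t • M - (1:ℂ) • 1 := e2' X
  rw [Matrix.SpecialLinearGroup.coe_pow]
  calc M^4 = (M*M)*(M*M) := by rw [show (4:ℕ) = 2*2 from rfl, pow_mul, pow_two, pow_two]
    _ = (t•M - (1:ℂ)•1) * (t•M - (1:ℂ)•1) := by rw [h2]
    _ = (t*t) • (M*M) - (2*t) • M + (1:ℂ)•1 := by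
        simp only [sub_mul, mul_sub, smul_mul_assoc, Matrix.mul_smul, smul_smul, one_mul, mul_one]
        module
    _ = (t*t) • (t•M - (1:ℂ)•1) - (2*t) • M + (1:ℂ)•1 := by rw [h2]
    _ = (t^3 - 2*t) • M + (1 - t^2) • 1 := by module

end powers

lemma coe_eq_one {X : SL2C} : X = 1 ↔ (X : Matrix (Fin 2) (Fin 2) ℂ) = 1 := by
  constructor
  · intro h; rw [h]; rfl
  · intro h; exact Subtype.coe_injective h

lemma coe_eq_neg_one {X : SL2C} : X = -1 ↔ (X : Matrix (Fin 2) (Fin 2) ℂ) = -1 := by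
  constructor
  · intro h; rw [h]
    rw [show ((-1 : SL2C) : Matrix (Fin 2) (Fin 2) ℂ) = -((1:SL2C) : Matrix (Fin 2) (Fin 2) ℂ)
      from Matrix.SpecialLinearGroup.coe_neg 1, Matrix.SpecialLinearGroup.coe_one]
  · intro h; apply Subtype.coe_injective
    show (X : Matrix (Fin 2) (Fin 2) ℂ) = ((-1 : SL2C) : Matrix (Fin 2) (Fin 2) ℂ)
    rw [h, show ((-1 : SL2C) : Matrix (Fin 2) (Fin 2) ℂ) = -((1:SL2C) : Matrix (Fin 2) (Fin 2) ℂ)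
      from Matrix.SpecialLinearGroup.coe_neg 1, Matrix.SpecialLinearGroup.coe_one]

lemma sl2_sq_one {X : SL2C} (h : X^2 = 1) : X = 1 ∨ X = -1 := by
  by_contra hc
  push_neg at hc
  have hm : (Matrix.trace (X : Matrix (Fin 2) (Fin 2) ℂ)) • (X : Matrix (Fin 2) (Fin 2) ℂ)
      = (2:ℂ) • 1 := by
    have h2 := e2' X
    have hx : (X : Matrix (Fin 2) (Fin 2) ℂ) * X = 1 := by
      have := coe_eq_one.mp h
      rwa [Matrix.SpecialLinearGroup.coe_pow, pow_two] at this
    rw [hx] at h2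
    linear_combination (norm := module) -h2
  have := (sl2_combo hm hc.1 hc.2).2
  norm_num at this

lemma sl2_sq_neg_one {X : SL2C} (h : X^2 = -1) :
    Matrix.trace (X : Matrix (Fin 2) (Fin 2) ℂ) = 0 := by
  have h2 := e2' X
  have hm : (X : Matrix (Fin 2) (Fin 2) ℂ) * X = -1 := by
    have := coe_eq_neg_one.mp h
    rwa [Matrix.SpecialLinearGroup.coe_pow, pow_two] at this
  rw [hm] at h2
  have key : (Matrix.trace (X : Matrix (Fin 2) (Fin 2) ℂ)) • (X : Matrix (Fin 2) (Fin 2) ℂ)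
      = (0:ℂ) • 1 := by
    linear_combination (norm := module) -h2
  have hX1 : X ≠ 1 := by
    intro hx; rw [hx] at h; simp at h
    exact sl2_one_ne_neg_one h
  have hX1' : X ≠ -1 := by
    intro hx; rw [hx] at h; simp at h
    exact sl2_one_ne_neg_one h
  exact (sl2_combo key hX1 hX1').1

lemma sl2_cube_one {X : SL2C} (h : X^3 = 1) (h1 : X ≠ 1) (h2 : X ≠ -1) :
    Matrix.trace (X : Matrix (Fin 2) (Fin 2) ℂ) = -1 := by
  set t := Matrix.trace (X : Matrix (Fin 2) (Fin 2) ℂ) with ht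
  have e3 := e3' X
  rw [h] at e3
  have key : (t^2 - 1) • (X : Matrix (Fin 2) (Fin 2) ℂ) = (1 + t) • 1 := by
    rw [Matrix.SpecialLinearGroup.coe_one] at e3
    linear_combination (norm := module) -e3
  obtain ⟨hr, hc⟩ := sl2_combo key h1 h2
  have hfac : (t-1)*(t+1) = 0 := by linear_combination hr
  rcases mul_eq_zero.mp hfac with h' | h'
  · exfalso; have ht1 : t = 1 := by linear_combination h'
    rw [ht1] at hc; norm_num at hc
  · linear_combination h'

lemma sl2_cube_neg_one {X : SL2C} (h : X^3 = -1) (h1 : X ≠ 1) (h2 : X ≠ -1) :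
    Matrix.trace (X : Matrix (Fin 2) (Fin 2) ℂ) = 1 := by
  set t := Matrix.trace (X : Matrix (Fin 2) (Fin 2) ℂ) with ht
  have e3 := e3' X
  rw [h] at e3
  have key : (t^2 - 1) • (X : Matrix (Fin 2) (Fin 2) ℂ) = (t - 1) • 1 := by
    rw [show ((-1 : SL2C) : Matrix (Fin 2) (Fin 2) ℂ) = -((1:SL2C) : Matrix (Fin 2) (Fin 2) ℂ)
      from Matrix.SpecialLinearGroup.coe_neg 1, Matrix.SpecialLinearGroup.coe_one] at e3
    linear_combination (norm := module) -e3
  obtain ⟨hr, hc⟩ := sl2_combo key h1 h2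
  have hfac : (t-1)*(t+1) = 0 := by linear_combination hr
  rcases mul_eq_zero.mp hfac with h' | h'
  · linear_combination h'
  · exfalso; have ht1 : t = -1 := by linear_combination h'
    rw [ht1] at hc; norm_num at hc

lemma sl2_four {X : SL2C} (h : X^4 = 1 ∨ X^4 = -1) (h1 : X ≠ 1) (h2 : X ≠ -1)
    (h4 : X^2 ≠ -1) :
    (Matrix.trace (X : Matrix (Fin 2) (Fin 2) ℂ))^2 = 2 := by
  set t := Matrix.trace (X : Matrix (Fin 2) (Fin 2) ℂ) with ht
  have e4 := e4' X
  rcases h with h | h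
  · exfalso
    rw [h, Matrix.SpecialLinearGroup.coe_one] at e4
    have key : (t^3 - 2*t) • (X : Matrix (Fin 2) (Fin 2) ℂ) = (t^2) • 1 := by
      linear_combination (norm := module) -e4
    obtain ⟨hr, hc⟩ := sl2_combo key h1 h2
    have ht0 : t = 0 := by
      have hfac : t * (t^2 - 2) = 0 := by linear_combination hr
      rcases mul_eq_zero.mp hfac with h' | h'
      · exact h'
      · exfalso
        have ht2 : t^2 = 2 := by linear_combination h'
        rw [ht2] at hc; norm_num at hc
    apply h4
    rw [coe_eq_neg_one]
    rw [Matrix.SpecialLinearGroup.coe_pow, pow_two, e2', ← ht, ht0]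
    module
  · rw [h] at e4
    rw [show ((-1 : SL2C) : Matrix (Fin 2) (Fin 2) ℂ) = -((1:SL2C) : Matrix (Fin 2) (Fin 2) ℂ)
      from Matrix.SpecialLinearGroup.coe_neg 1, Matrix.SpecialLinearGroup.coe_one] at e4
    have key : (t^3 - 2*t) • (X : Matrix (Fin 2) (Fin 2) ℂ) = (t^2 - 2) • 1 := by
      linear_combination (norm := module) -e4
    obtain ⟨hr, hc⟩ := sl2_combo key h1 h2
    linear_combination hc

set_option maxRecDepth 40000 in
lemma s4_orders : ∀ a : Equiv.Perm (Fin 4), a^2 = 1 ∨ a^3 = 1 ∨ a^4 = 1 := by decide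

set_option maxRecDepth 40000 in
lemma s4_center : ∀ a : Equiv.Perm (Fin 4), (∀ y, a*y = y*a) → a = 1 := by decide

set_option maxRecDepth 40000 in
lemma s4_comm_order3 : ∀ a h : Equiv.Perm (Fin 4), a^4 = 1 → a^2 ≠ 1 → h^4 = 1 → h^2 ≠ 1 →
    a * h ≠ h * a → (a*h*a⁻¹*h⁻¹)^3 = 1 ∧ a*h*a⁻¹*h⁻¹ ≠ 1 := by decide

set_option maxRecDepth 40000 in
lemma s4_prod : ∀ a h : Equiv.Perm (Fin 4), a^4 = 1 → a^2 ≠ 1 → h^4 = 1 → h^2 ≠ 1 →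
    (a*h)^2 = 1 ∨ (a*h)^3 = 1 := by decide

end SL2Aux

set_option maxHeartbeats 2000000 in
/-- Lemma 4.8, `S₄` case: parameters of `S₄` with conjugate elliptic generators. -/
theorem params_S4 (A H : SL2C) (n : ℕ) (hn : 3 ≤ n)
    (hA : IsEllipticOfOrder A n)
    (hconj : ∃ C : SL2C, H = C * A * C⁻¹ ∨ H = -(C * A * C⁻¹))
    (hiso : Nonempty (↥(pslImage (Subgroup.closure {A, H})) ≃* Equiv.Perm (Fin 4))) :
    γp A H = -1 ∧ βp A = -2 ∧ βp H = -2 := by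
  classical
  obtain ⟨φ⟩ := hiso
  set Γ : Subgroup SL2C := Subgroup.closure {A, H} with hΓdef
  have hAΓ : A ∈ Γ := Subgroup.subset_closure (by simp)
  have hHΓ : H ∈ Γ := Subgroup.subset_closure (by simp)
  set Q : SL2C →* PSL2C := QuotientGroup.mk' (Subgroup.center SL2C) with hQ
  have hF : True := trivial
  let F : Γ →* Equiv.Perm (Fin 4) := φ.toMonoidHom.comp (Q.subgroupMap Γ)
  have hFsurj : Function.Surjective F :=
    φ.surjective.comp (Q.subgroupMap_surjective Γ)
  -- basic translation
  have hF1 : ∀ (X : SL2C) (hX : X ∈ Γ), F ⟨X, hX⟩ = 1 ↔ (X = 1 ∨ X = -1) := by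
    intro X hX
    have step1 : F ⟨X, hX⟩ = 1 ↔ (Q.subgroupMap Γ) ⟨X, hX⟩ = 1 := by
      constructor
      · intro hh
        apply φ.injective
        exact hh.trans (_root_.map_one φ).symm
      · intro hh
        show φ ((Q.subgroupMap Γ) ⟨X, hX⟩) = 1
        rw [hh]; exact _root_.map_one φ
    rw [step1]
    have step2 : (Q.subgroupMap Γ) ⟨X, hX⟩ = 1 ↔ Q X = 1 := by
      rw [Subtype.ext_iff]
      rfl
    rw [step2]
    have step3 : Q X = 1 ↔ X ∈ Subgroup.center SL2C := QuotientGroup.eq_one_iff X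
    rw [step3]
    exact ⟨SL2Aux.sl2_center, SL2Aux.sl2_center'⟩
  have hFpow : ∀ (X : SL2C) (hX : X ∈ Γ) (k : ℕ),
      (F ⟨X, hX⟩)^k = F ⟨X^k, pow_mem hX k⟩ := by
    intro X hX k
    have hpe : (⟨X, hX⟩ : Γ)^k = ⟨X^k, pow_mem hX k⟩ := Subtype.ext (by simp)
    rw [← map_pow, hpe]
  have hFpm : ∀ (X : SL2C) (hX : X ∈ Γ) (k : ℕ),
      ((F ⟨X, hX⟩)^k = 1 ↔ (X^k = 1 ∨ X^k = -1)) := by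
    intro X hX k
    rw [hFpow X hX k, hF1]
  -- H elliptic facts
  obtain ⟨C, hC⟩ := hconj
  have hHpowC : ∀ k : ℕ, H^k = C*A^k*C⁻¹ ∨ H^k = -(C*A^k*C⁻¹) := by
    intro k
    rcases hC with hC | hC <;> rw [hC]
    · left; exact conj_pow
    · rcases Nat.even_or_odd k with hk | hk
      · left; rw [hk.neg_pow, conj_pow]
      · right; rw [hk.neg_pow, conj_pow]
  have hcen_iff : ∀ X : SL2C, X ∈ Subgroup.center SL2C ↔ (X = 1 ∨ X = -1) :=
    fun X => ⟨SL2Aux.sl2_center, SL2Aux.sl2_center'⟩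
  have hconjcen : ∀ X : SL2C, (C*X*C⁻¹ ∈ Subgroup.center SL2C ↔ X ∈ Subgroup.center SL2C) := by
    intro X
    constructor
    · intro hh
      have h2 := Subgroup.Normal.conj_mem inferInstance _ hh C⁻¹
      simpa [mul_assoc] using h2
    · intro hh
      exact Subgroup.Normal.conj_mem inferInstance _ hh C
  have hnegcen : ∀ X : SL2C, (-X ∈ Subgroup.center SL2C ↔ X ∈ Subgroup.center SL2C) := by
    intro X
    have hm1 : (-1 : SL2C) ∈ Subgroup.center SL2C := SL2Aux.sl2_center' (Or.inr rfl)
    constructor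
    · intro hh
      have := Subgroup.mul_mem _ hm1 hh
      simpa using this
    · intro hh
      have := Subgroup.mul_mem _ hm1 hh
      simpa [neg_mul, one_mul] using this
  have hHone : ∀ k : ℕ, ((H^k = 1 ∨ H^k = -1) ↔ (A^k = 1 ∨ A^k = -1)) := by
    intro k
    rw [← hcen_iff, ← hcen_iff]
    rcases hHpowC k with hh | hh <;> rw [hh]
    · exact hconjcen _
    · rw [hnegcen]; exact hconjcen _
  -- the generators in S₄
  set a : Equiv.Perm (Fin 4) := F ⟨A, hAΓ⟩ with ha_def
  set h : Equiv.Perm (Fin 4) := F ⟨H, hHΓ⟩ with hh_def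
  have haA : ∀ k : ℕ, (a^k = 1 ↔ (A^k = 1 ∨ A^k = -1)) := fun k => hFpm A hAΓ k
  have hhH : ∀ k : ℕ, (h^k = 1 ↔ (A^k = 1 ∨ A^k = -1)) := by
    intro k
    rw [hFpm H hHΓ k]
    exact hHone k
  -- generation
  have hgen : Subgroup.closure ({⟨A, hAΓ⟩, ⟨H, hHΓ⟩} : Set Γ) = ⊤ := by
    have h0 := Subgroup.closure_closure_coe_preimage (k := ({A, H} : Set SL2C))
    rw [← h0]
    congr 1
    ext x
    simp only [Set.mem_preimage, Set.mem_insert_iff, Set.mem_singleton_iff]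
    constructor
    · rintro (rfl | rfl)
      · left; rfl
      · right; rfl
    · rintro (hx | hx)
      · left; exact Subtype.ext hx
      · right; exact Subtype.ext hx
  have htop : Subgroup.closure ({a, h} : Set (Equiv.Perm (Fin 4))) = ⊤ := by
    calc Subgroup.closure ({a, h} : Set (Equiv.Perm (Fin 4)))
        = Subgroup.map F (Subgroup.closure ({⟨A, hAΓ⟩, ⟨H, hHΓ⟩} : Set Γ)) := by
          rw [MonoidHom.map_closure]
          congr 1
          rw [Set.image_pair]
      _ = Subgroup.map F ⊤ := by rw [hgen]
      _ = ⊤ := by rw [← MonoidHom.range_eq_map]; exact MonoidHom.range_eq_top.mpr hFsurj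
  -- n = 3 or 4
  have hapow : ∀ k : ℕ, 1 ≤ k → k < n → a^k ≠ 1 := by
    intro k h1 h2 h3
    rcases (haA k).mp h3 with e | e
    · exact (hA.2 k h1 h2).1 e
    · exact (hA.2 k h1 h2).2 e
  have hn34 : n = 3 ∨ n = 4 := by
    by_cases hn3 : n = 3
    · exact Or.inl hn3
    · have hn4 : 4 ≤ n := by omega
      rcases SL2Aux.s4_orders a with h2 | h3 | h4
      · exact absurd h2 (hapow 2 (by norm_num) (by omega))
      · exact absurd h3 (hapow 3 (by norm_num) (by omega))
      · right
        by_contra hne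
        exact (hapow 4 (by norm_num) (by omega)) h4
  -- rule out n = 3
  have hn4 : n = 4 := by
    rcases hn34 with h3 | h4
    · exfalso
      subst h3
      have ha3 : a^3 = 1 := (haA 3).mpr hA.1
      have hh3 : h^3 = 1 := (hhH 3).mpr hA.1
      have hsign : ∀ u : ℤˣ, u^3 = 1 → u = 1 := by decide
      have hsub : Subgroup.closure ({a, h} : Set (Equiv.Perm (Fin 4)))
          ≤ (Equiv.Perm.sign (α := Fin 4)).ker := by
        rw [Subgroup.closure_le]
        rintro x hx
        simp only [Set.mem_insert_iff, Set.mem_singleton_iff] at hx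
        rcases hx with rfl | rfl <;>
          simp only [SetLike.mem_coe, MonoidHom.mem_ker]
        · exact hsign _ (by rw [← map_pow, ha3, _root_.map_one])
        · exact hsign _ (by rw [← map_pow, hh3, _root_.map_one])
      rw [htop] at hsub
      have hsw := hsub (Subgroup.mem_top (Equiv.swap (0 : Fin 4) 1))
      rw [MonoidHom.mem_ker, Equiv.Perm.sign_swap (by norm_num)] at hsw
      exact absurd hsw (by decide)
    · exact h4
  subst hn4
  -- basic A facts
  have hAne : A ≠ 1 ∧ A ≠ -1 := by
    have := hA.2 1 le_rfl (by norm_num)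
    simpa [pow_one] using this
  have hA2 := hA.2 2 (by norm_num) (by norm_num)
  have hAk1 := hA.2 1 le_rfl (by norm_num)
  have hHne : H ≠ 1 ∧ H ≠ -1 := by
    constructor <;> intro hh
    · rcases (hHone 1).mp (by rw [pow_one]; exact Or.inl hh) with e | e
      · exact hAk1.1 e
      · exact hAk1.2 e
    · rcases (hHone 1).mp (by rw [pow_one]; exact Or.inr hh) with e | e
      · exact hAk1.1 e
      · exact hAk1.2 e
  have hH2 : H^2 ≠ 1 ∧ H^2 ≠ -1 := by
    have hAk2 := hA.2 2 (by norm_num) (by norm_num)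
    constructor <;> intro hh
    · rcases (hHone 2).mp (Or.inl hh) with e | e
      · exact hAk2.1 e
      · exact hAk2.2 e
    · rcases (hHone 2).mp (Or.inr hh) with e | e
      · exact hAk2.1 e
      · exact hAk2.2 e
  have hH4 : H^4 = 1 ∨ H^4 = -1 := (hHone 4).mpr hA.1
  -- traces
  set x : ℂ := Matrix.trace (A : Matrix (Fin 2) (Fin 2) ℂ) with hx_def
  set y : ℂ := Matrix.trace (H : Matrix (Fin 2) (Fin 2) ℂ) with hy_def
  have hx2 : x^2 = 2 := SL2Aux.sl2_four hA.1 hAne.1 hAne.2 hA2.2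
  have hy2 : y^2 = 2 := SL2Aux.sl2_four hH4 hHne.1 hHne.2 hH2.2
  -- S4 elements a h
  have ha4 : a^4 = 1 := (haA 4).mpr hA.1
  have ha2 : a^2 ≠ 1 := by
    intro hh
    rcases (haA 2).mp hh with e | e
    · exact hA2.1 e
    · exact hA2.2 e
  have hh4 : h^4 = 1 := (hhH 4).mpr hA.1
  have hh2 : h^2 ≠ 1 := by
    intro hh
    rcases (hhH 2).mp hh with e | e
    · exact hA2.1 e
    · exact hA2.2 e
  have hcomm : a*h ≠ h*a := by
    intro hc
    have hsub : Subgroup.closure ({a, h} : Set (Equiv.Perm (Fin 4)))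
        ≤ Subgroup.centralizer {a, h} := by
      rw [Subgroup.closure_le]
      rintro z hz
      simp only [Set.mem_insert_iff, Set.mem_singleton_iff] at hz
      rcases hz with rfl | rfl <;>
        refine SetLike.mem_coe.mpr (Subgroup.mem_centralizer_iff.mpr ?_) <;>
        rintro g hg <;> simp only [Set.mem_insert_iff, Set.mem_singleton_iff] at hg <;>
        rcases hg with rfl | rfl
      · rfl
      · exact hc.symm
      · exact hc
      · rfl
    rw [htop] at hsub
    have hya : ∀ ysl : Equiv.Perm (Fin 4), a * ysl = ysl * a := by
      intro ysl
      have := Subgroup.mem_centralizer_iff.mp (hsub (Subgroup.mem_top ysl))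
      exact this a (by simp)
    have := SL2Aux.s4_center a hya
    apply ha2
    rw [this, one_pow]
  -- the commutator
  have hk := SL2Aux.s4_comm_order3 a h ha4 ha2 hh4 hh2 hcomm
  set K : SL2C := A*H*A⁻¹*H⁻¹ with hK_def
  have hKΓ : K ∈ Γ :=
    Subgroup.mul_mem _ (Subgroup.mul_mem _ (Subgroup.mul_mem _ hAΓ hHΓ)
      (Subgroup.inv_mem _ hAΓ)) (Subgroup.inv_mem _ hHΓ)
  have hFK : F ⟨K, hKΓ⟩ = a*h*a⁻¹*h⁻¹ := by
    have : (⟨K, hKΓ⟩ : Γ) = ⟨A, hAΓ⟩ * ⟨H, hHΓ⟩ * (⟨A, hAΓ⟩)⁻¹ * (⟨H, hHΓ⟩)⁻¹ :=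
      Subtype.ext (by simp [hK_def])
    rw [this, _root_.map_mul, _root_.map_mul, _root_.map_mul, map_inv, map_inv]
  have hK3 : K^3 = 1 ∨ K^3 = -1 := by
    apply (hFpm K hKΓ 3).mp
    rw [hFK]
    exact hk.1
  have hKne : K ≠ 1 ∧ K ≠ -1 := by
    constructor <;> intro hh
    · exact hk.2 (by rw [← hFK]; exact (hF1 K hKΓ).mpr (Or.inl hh))
    · exact hk.2 (by rw [← hFK]; exact (hF1 K hKΓ).mpr (Or.inr hh))
  -- product
  set P : SL2C := A*H with hP_def
  have hPΓ : P ∈ Γ := Subgroup.mul_mem _ hAΓ hHΓ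
  have hFP : F ⟨P, hPΓ⟩ = a*h := by
    have : (⟨P, hPΓ⟩ : Γ) = ⟨A, hAΓ⟩ * ⟨H, hHΓ⟩ := Subtype.ext (by simp [hP_def])
    rw [this, _root_.map_mul]
  have hp := SL2Aux.s4_prod a h ha4 ha2 hh4 hh2
  have hPcases : (P^2 = 1 ∨ P^2 = -1) ∨ (P^3 = 1 ∨ P^3 = -1) := by
    rcases hp with hp | hp
    · left; apply (hFpm P hPΓ 2).mp; rw [hFP]; exact hp
    · right; apply (hFpm P hPΓ 3).mp; rw [hFP]; exact hp
  set z : ℂ := Matrix.trace (P : Matrix (Fin 2) (Fin 2) ℂ) with hz_def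
  have htr1 : Matrix.trace ((1 : SL2C) : Matrix (Fin 2) (Fin 2) ℂ) = 2 := by
    rw [Matrix.SpecialLinearGroup.coe_one, Matrix.trace_one]
    norm_num
  have htrn1 : Matrix.trace ((-1 : SL2C) : Matrix (Fin 2) (Fin 2) ℂ) = -2 := by
    rw [show ((-1 : SL2C) : Matrix (Fin 2) (Fin 2) ℂ) = -((1:SL2C) : Matrix (Fin 2) (Fin 2) ℂ)
      from Matrix.SpecialLinearGroup.coe_neg 1, Matrix.trace_neg,
      Matrix.SpecialLinearGroup.coe_one, Matrix.trace_one]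
    norm_num
  have hz : z = 0 ∨ z = 1 ∨ z = -1 ∨ z = 2 ∨ z = -2 := by
    by_cases hP1 : P = 1
    · right; right; right; left; rw [hz_def, hP1, htr1]
    by_cases hPn1 : P = -1
    · right; right; right; right; rw [hz_def, hPn1, htrn1]
    rcases hPcases with hsq | hcu
    · rcases hsq with hsq | hsq
      · rcases SL2Aux.sl2_sq_one hsq with e | e
        · exact absurd e hP1
        · exact absurd e hPn1
      · left; exact SL2Aux.sl2_sq_neg_one hsq
    · rcases hcu with hcu | hcu
      · right; right; left; exact SL2Aux.sl2_cube_one hcu hP1 hPn1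
      · right; left; exact SL2Aux.sl2_cube_neg_one hcu hP1 hPn1
  -- Fricke
  have hKcoe : ((K : SL2C) : Matrix (Fin 2) (Fin 2) ℂ) =
      (A : Matrix (Fin 2) (Fin 2) ℂ) * H * (A : Matrix (Fin 2) (Fin 2) ℂ).adjugate
        * (H : Matrix (Fin 2) (Fin 2) ℂ).adjugate := by
    rw [hK_def]
    rw [Matrix.SpecialLinearGroup.coe_mul, Matrix.SpecialLinearGroup.coe_mul,
      Matrix.SpecialLinearGroup.coe_mul, Matrix.SpecialLinearGroup.coe_inv,
      Matrix.SpecialLinearGroup.coe_inv]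
  have hfr : Matrix.trace ((K : SL2C) : Matrix (Fin 2) (Fin 2) ℂ)
      = x^2 + y^2 + z^2 - x*y*z - 2 := by
    rw [hKcoe]
    have := SL2Aux.fricke (A : Matrix (Fin 2) (Fin 2) ℂ) (H : Matrix (Fin 2) (Fin 2) ℂ) A.2 H.2
    rw [this, hx_def, hy_def, hz_def, hP_def, Matrix.SpecialLinearGroup.coe_mul]
  have hxy : x*y = 2 ∨ x*y = -2 := by
    have hsq : (x*y - 2)*(x*y + 2) = 0 := by
      have : (x*y)^2 = 4 := by rw [mul_pow, hx2, hy2]; norm_num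
      linear_combination this
    rcases mul_eq_zero.mp hsq with e | e
    · left; linear_combination e
    · right; linear_combination e
  -- conclude
  have hs : Matrix.trace ((K : SL2C) : Matrix (Fin 2) (Fin 2) ℂ) = 1 := by
    rcases hK3 with h3 | h3
    · exfalso
      have hsm1 : Matrix.trace ((K : SL2C) : Matrix (Fin 2) (Fin 2) ℂ) = -1 :=
        SL2Aux.sl2_cube_one h3 hKne.1 hKne.2
      rw [hsm1] at hfr
      rw [hx2, hy2] at hfr
      have heq : z^2 - (x*y)*z + 3 = 0 := by linear_combination -hfr
      rcases hxy with hw | hw <;> rw [hw] at heq <;>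
        rcases hz with h0 | h0 | h0 | h0 | h0 <;> rw [h0] at heq <;> norm_num at heq
    · exact SL2Aux.sl2_cube_neg_one h3 hKne.1 hKne.2
  refine ⟨?_, ?_, ?_⟩
  · rw [γp, ← hK_def, hs]; norm_num
  · rw [βp, ← hx_def, hx2]; norm_num
  · rw [βp, ← hy_def, hy2]; norm_num

end
end
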